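/- Let (X,T₁,…,T_d) be a minimal distal ℤ^d-system. Then the quotient ℤ^d-system (X/R_{T₁,…,T_d}(X), T₁,…,T_d) has the unique closing parallelepiped property, and it is the maximal factor of (X,T₁,…,T_d) with this property: for every factor map π' from (X,T₁,…,T_d) onto a ℤ^d-system (Z,T₁,…,T_d) having the unique closing parallelepiped property, π' factorizes through the quotient map X → X/R_{T₁,…,T_d}(X). -/

import Mathlib

open Function Set

/-- The group of self-homeomorphisms of a topological space, under composition. -/
instance homeomorphGroup {X : Type*} [TopologicalSpace X] : Group (X ≃ₜ X) where
  mul f g := g.trans f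
  one := Homeomorph.refl X
  inv := Homeomorph.symm
  mul_assoc _ _ _ := rfl
  one_mul _ := Homeomorph.ext fun _ => rfl
  mul_one _ := Homeomorph.ext fun _ => rfl
  inv_mul_cancel f := Homeomorph.self_trans_symm f

variable {d : ℕ}

/-- The homeomorphism `T₁^{n₁ε₁} ⋯ T_d^{n_dε_d}` associated with `n ∈ ℤ^d` and a vertex
`ε ∈ {0,1}^d` of the cube. -/
def cubeMap {X : Type*} [TopologicalSpace X] (T : Fin d → X ≃ₜ X)
    (n : Fin d → ℤ) (ε : Fin d → Bool) : X ≃ₜ X :=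
  ((List.finRange d).map (fun i => T i ^ (if ε i then n i else 0))).prod

/-- The space of directional dynamical cubes `Q_{T₁,…,T_d}(X)`. -/
def cubes {X : Type*} [TopologicalSpace X] (T : Fin d → X ≃ₜ X) :
    Set ((Fin d → Bool) → X) :=
  closure {y | ∃ (x : X) (n : Fin d → ℤ), ∀ ε, y ε = cubeMap T n ε x}

/-- The group of homeomorphisms generated by `T₁,…,T_d`. -/
def genGroup {X : Type*} [TopologicalSpace X] (T : Fin d → X ≃ₜ X) : Subgroup (X ≃ₜ X) :=
  Subgroup.closure (Set.range T)

/-- Minimality: every orbit is dense. -/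
def IsMinimalSystem {X : Type*} [TopologicalSpace X] (T : Fin d → X ≃ₜ X) : Prop :=
  ∀ x : X, Dense {y : X | ∃ g ∈ genGroup T, g x = y}

/-- Distality: `inf_{g ∈ G} dist (g x) (g y) > 0` whenever `x ≠ y`. -/
def IsDistalSystem {X : Type*} [MetricSpace X] (T : Fin d → X ≃ₜ X) : Prop :=
  ∀ x y : X, x ≠ y → ∃ δ > 0, ∀ g ∈ genGroup T, δ ≤ dist (g x) (g y)

/-- Unique closing parallelepiped property: two cubes agreeing in `2^d - 1` of their
coordinates are equal. -/
def HasUCP {X : Type*} [TopologicalSpace X] (T : Fin d → X ≃ₜ X) : Prop :=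
  ∀ x ∈ cubes T, ∀ y ∈ cubes T,
    ∀ ε₀ : Fin d → Bool, (∀ ε, ε ≠ ε₀ → x ε = y ε) → x = y

/-- The relation `R_{T_j}(X)`: pairs `(x,y)` for which there is a cube `z` with
`z_∅ = x`, `z_{{j}} = y` and `z_ε = z_{ε ∪ {j}}` for every nonempty `ε ⊆ [d] \ {j}`. -/
def relRT {X : Type*} [TopologicalSpace X] (T : Fin d → X ≃ₜ X) (j : Fin d) : Set (X × X) :=
  {p | ∃ z ∈ cubes T, z (fun _ => false) = p.1 ∧ z (fun i => decide (i = j)) = p.2 ∧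
    ∀ ε : Fin d → Bool, ε j = false → ε ≠ (fun _ => false) →
      z ε = z (Function.update ε j true)}

/-- The `(T₁,…,T_d)`-regionally proximal relation. -/
def relRP {X : Type*} [TopologicalSpace X] (T : Fin d → X ≃ₜ X) : Set (X × X) :=
  ⋂ j : Fin d, relRT T j

/-- The relation underlying the quotient `X/R_{T₁,…,T_d}(X)`. -/
def rpRel {X : Type*} [TopologicalSpace X] {d : ℕ} (T : Fin d → X ≃ₜ X) : X → X → Prop :=
  fun a b => (a, b) ∈ relRP T

section Algebra

variable {X : Type*} [TopologicalSpace X]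

@[simp] lemma hmul_apply (f g : X ≃ₜ X) (x : X) : (f * g) x = f (g x) := rfl

@[simp] lemma hone_apply (x : X) : (1 : X ≃ₜ X) x = x := rfl

lemma hinv_def (f : X ≃ₜ X) : f⁻¹ = f.symm := rfl

@[simp] lemma hinv_apply (f : X ≃ₜ X) (x : X) : f⁻¹ (f x) = x := f.symm_apply_apply x

lemma hpow_apply_intertwine {Z : Type*} [TopologicalSpace Z] (f : X ≃ₜ X) (s : Z ≃ₜ Z)
    (g : X → Z) (h : ∀ x, g (f x) = s (g x)) :
    ∀ (n : ℕ) (x : X), g ((f ^ n) x) = (s ^ n) (g x) := by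
  intro n
  induction n with
  | zero => simp
  | succ m ih =>
    intro x
    rw [pow_succ, pow_succ, hmul_apply, hmul_apply, ih, h]

lemma hzpow_apply_intertwine {Z : Type*} [TopologicalSpace Z] (f : X ≃ₜ X) (s : Z ≃ₜ Z)
    (g : X → Z) (h : ∀ x, g (f x) = s (g x)) :
    ∀ (k : ℤ) (x : X), g ((f ^ k) x) = (s ^ k) (g x) := by
  intro k x
  cases k with
  | ofNat n => rw [Int.ofNat_eq_coe, zpow_natCast, zpow_natCast, hpow_apply_intertwine f s g h]
  | negSucc n =>
    rw [zpow_negSucc, zpow_negSucc]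
    have h1 : g ((f ^ (n + 1)) ((f ^ (n + 1))⁻¹ x)) = (s ^ (n + 1)) (g ((f ^ (n + 1))⁻¹ x)) :=
      hpow_apply_intertwine f s g h (n + 1) _
    have h2 : (f ^ (n + 1)) ((f ^ (n + 1))⁻¹ x) = x := by
      rw [← hmul_apply, mul_inv_cancel, hone_apply]
    rw [h2] at h1
    have := congrArg ((s ^ (n + 1))⁻¹ : Z ≃ₜ Z) h1
    rw [← hmul_apply, inv_mul_cancel, hone_apply] at this
    exact this.symm

/-- the multi-power `∏ i, (T i)^(a i)`. -/
def mprod (T : Fin d → X ≃ₜ X) (a : Fin d → ℤ) : X ≃ₜ X :=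
  ((List.finRange d).map (fun i => T i ^ a i)).prod

lemma cubeMap_eq_mprod (T : Fin d → X ≃ₜ X) (n : Fin d → ℤ) (ε : Fin d → Bool) :
    cubeMap T n ε = mprod T (fun i => if ε i then n i else 0) := rfl

variable {T : Fin d → X ≃ₜ X}

lemma commute_of_hcomm (hc : ∀ i j : Fin d, ∀ x : X, T i (T j x) = T j (T i x))
    (i j : Fin d) : Commute (T i) (T j) :=
  Homeomorph.ext fun x => hc i j x

lemma mprod_mul (hc : ∀ i j : Fin d, Commute (T i) (T j)) (a b : Fin d → ℤ) :
    mprod T a * mprod T b = mprod T (a + b) := by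
  show ((List.finRange d).map (fun i => T i ^ a i)).prod *
      ((List.finRange d).map (fun i => T i ^ b i)).prod
      = ((List.finRange d).map (fun i => T i ^ (a i + b i))).prod
  induction (List.finRange d) with
  | nil => simp
  | cons j l ih =>
    simp only [List.map_cons, List.prod_cons]
    have hcom : Commute ((l.map (fun i => T i ^ a i)).prod) (T j ^ b j) :=
      Commute.list_prod_left _ _ (by
        intro x hx
        obtain ⟨i, _, rfl⟩ := List.mem_map.mp hx
        exact Commute.zpow_zpow (hc i j) _ _)
    calc T j ^ a j * (l.map (fun i => T i ^ a i)).prod *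
          (T j ^ b j * (l.map (fun i => T i ^ b i)).prod)
        = T j ^ a j * ((l.map (fun i => T i ^ a i)).prod * T j ^ b j) *
          (l.map (fun i => T i ^ b i)).prod := by
          simp [mul_assoc]
      _ = T j ^ a j * (T j ^ b j * (l.map (fun i => T i ^ a i)).prod) *
          (l.map (fun i => T i ^ b i)).prod := by rw [hcom.eq]
      _ = (T j ^ a j * T j ^ b j) * ((l.map (fun i => T i ^ a i)).prod *
          (l.map (fun i => T i ^ b i)).prod) := by simp [mul_assoc]
      _ = T j ^ (a j + b j) * (l.map (fun i => T i ^ (a i + b i))).prod := by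
          rw [← zpow_add, ih]

lemma mprod_apply_mprod (hc : ∀ i j : Fin d, Commute (T i) (T j)) (a b : Fin d → ℤ) (x : X) :
    mprod T a (mprod T b x) = mprod T (a + b) x := by
  rw [← hmul_apply, mprod_mul hc]

@[simp] lemma mprod_zero : mprod T (fun _ => (0 : ℤ)) = 1 := by
  apply List.prod_eq_one
  intro x hx
  simp only [List.mem_map] at hx
  obtain ⟨i, _, rfl⟩ := hx
  exact zpow_zero _

lemma mprod_intertwine {Z : Type*} [TopologicalSpace Z] (S : Fin d → Z ≃ₜ Z) (g : X → Z)
    (hg : ∀ i x, g (T i x) = S i (g x)) (a : Fin d → ℤ) (x : X) :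
    g (mprod T a x) = mprod S a (g x) := by
  show g (((List.finRange d).map (fun i => T i ^ a i)).prod x)
      = ((List.finRange d).map (fun i => S i ^ a i)).prod (g x)
  induction (List.finRange d) generalizing x with
  | nil => simp
  | cons j l ih =>
    simp only [List.map_cons, List.prod_cons, hmul_apply]
    rw [hzpow_apply_intertwine (T j) (S j) g (hg j), ih]

end Algebra

section Cubes

variable {X : Type*} [TopologicalSpace X] {T : Fin d → X ≃ₜ X}

lemma cubes_def (T : Fin d → X ≃ₜ X) :
    cubes T = closure {y | ∃ (x : X) (n : Fin d → ℤ), ∀ ε, y ε = cubeMap T n ε x} := rfl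

lemma const_mem_cubes (x : X) : (fun _ : Fin d → Bool => x) ∈ cubes T := by
  apply subset_closure
  refine ⟨x, fun _ => 0, fun ε => ?_⟩
  rw [cubeMap_eq_mprod]
  have h : (fun i => if ε i then (0:ℤ) else 0) = fun _ => (0:ℤ) := by funext i; simp
  rw [h, mprod_zero, hone_apply]

lemma cubes_map_mem {Z : Type*} [TopologicalSpace Z] (S : Fin d → Z ≃ₜ Z) (g : X → Z)
    (hgc : Continuous g) (hg : ∀ i x, g (T i x) = S i (g x)) {z} (hz : z ∈ cubes T) :
    (fun ε => g (z ε)) ∈ cubes S := by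
  have hF : Continuous (fun (z : (Fin d → Bool) → X) (ε : Fin d → Bool) => g (z ε)) :=
    continuous_pi fun ε => hgc.comp (continuous_apply ε)
  refine map_mem_closure hF hz ?_
  rintro y ⟨x, n, hy⟩
  exact ⟨g x, n, fun ε => by
    show g (y ε) = _
    rw [hy ε, cubeMap_eq_mprod, cubeMap_eq_mprod, mprod_intertwine S g hg]⟩

lemma cubeMap_flip (hc : ∀ i j : Fin d, Commute (T i) (T j)) (n : Fin d → ℤ) (j : Fin d)
    (ε : Fin d → Bool) (x : X) :
    cubeMap T n (Function.update ε j (!(ε j))) x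
      = cubeMap T (Function.update n j (-(n j))) ε
          (cubeMap T n (fun i => decide (i = j)) x) := by
  rw [cubeMap_eq_mprod, cubeMap_eq_mprod, cubeMap_eq_mprod, mprod_apply_mprod hc]
  have he : (fun i => if Function.update ε j (!(ε j)) i = true then n i else 0)
      = ((fun i => if ε i = true then Function.update n j (-(n j)) i else 0) +
         (fun i => if decide (i = j) = true then n i else 0)) := by
    funext i
    by_cases hij : i = j
    · subst hij
      simp only [Function.update_self, Pi.add_apply, decide_eq_true_eq, if_pos rfl]
      cases h : ε i <;> simp [h]
    · simp [Function.update_of_ne hij, hij]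
  rw [he]

lemma cubeMap_updTrue (hc : ∀ i j : Fin d, Commute (T i) (T j)) (n : Fin d → ℤ) (j : Fin d)
    (ε : Fin d → Bool) (x : X) :
    cubeMap T n (Function.update ε j true) x
      = cubeMap T (Function.update n j 0) ε
          (cubeMap T n (fun i => decide (i = j)) x) := by
  rw [cubeMap_eq_mprod, cubeMap_eq_mprod, cubeMap_eq_mprod, mprod_apply_mprod hc]
  have he : (fun i => if Function.update ε j true i = true then n i else 0)
      = ((fun i => if ε i = true then Function.update n j 0 i else 0) +
         (fun i => if decide (i = j) = true then n i else 0)) := by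
    funext i
    by_cases hij : i = j
    · subst hij
      simp only [Function.update_self, Pi.add_apply, decide_eq_true_eq, if_pos rfl]
      cases h : ε i <;> simp [h]
    · simp [Function.update_of_ne hij, hij]
  rw [he]

lemma cubes_flip_mem (hc : ∀ i j : Fin d, Commute (T i) (T j)) (j : Fin d) {z}
    (hz : z ∈ cubes T) :
    (fun ε => z (Function.update ε j (!(ε j)))) ∈ cubes T := by
  have hF : Continuous (fun (z : (Fin d → Bool) → X) (ε : Fin d → Bool) =>
      z (Function.update ε j (!(ε j)))) := continuous_pi fun ε => continuous_apply _
  refine map_mem_closure hF hz ?_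
  rintro y ⟨x, n, hy⟩
  exact ⟨cubeMap T n (fun i => decide (i = j)) x, Function.update n j (-(n j)),
    fun ε => by
      show y (Function.update ε j (!(ε j))) = _
      rw [hy _, cubeMap_flip hc]⟩

lemma cubes_updTrue_mem (hc : ∀ i j : Fin d, Commute (T i) (T j)) (j : Fin d) {z}
    (hz : z ∈ cubes T) :
    (fun ε => z (Function.update ε j true)) ∈ cubes T := by
  have hF : Continuous (fun (z : (Fin d → Bool) → X) (ε : Fin d → Bool) =>
      z (Function.update ε j true)) := continuous_pi fun ε => continuous_apply _
  refine map_mem_closure hF hz ?_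
  rintro y ⟨x, n, hy⟩
  exact ⟨cubeMap T n (fun i => decide (i = j)) x, Function.update n j 0,
    fun ε => by
      show y (Function.update ε j true) = _
      rw [hy _, cubeMap_updTrue hc]⟩

lemma upd_false_true (j : Fin d) :
    Function.update (fun _ : Fin d => false) j true = fun i => decide (i = j) := by
  funext i
  by_cases h : i = j
  · subst h; simp
  · simp [Function.update_of_ne h, h]

lemma upd_ind_false (j : Fin d) :
    Function.update (fun i : Fin d => decide (i = j)) j false = fun _ => false := by
  funext i
  by_cases h : i = j
  · subst h; simp
  · simp [Function.update_of_ne h, h]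

end Cubes

section Rel

variable {X : Type*} [TopologicalSpace X] {T : Fin d → X ≃ₜ X}

lemma relRT_refl (j : Fin d) (a : X) : (a, a) ∈ relRT T j :=
  ⟨fun _ => a, const_mem_cubes a, rfl, rfl, fun _ _ _ => rfl⟩

lemma rpRel_refl (a : X) : rpRel T a a := Set.mem_iInter.2 fun j => relRT_refl j a

lemma relRT_symm (hc : ∀ i j : Fin d, Commute (T i) (T j)) {j : Fin d} {a b : X}
    (h : (a, b) ∈ relRT T j) : (b, a) ∈ relRT T j := by
  obtain ⟨z, hz, h1, h2, h3⟩ := h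
  refine ⟨fun ε => z (Function.update ε j (!(ε j))), cubes_flip_mem hc j hz, ?_, ?_, ?_⟩
  · show z (Function.update (fun _ => false) j (!(false : Bool))) = b
    rw [Bool.not_false, upd_false_true j]
    exact h2
  · show z (Function.update (fun i => decide (i = j)) j (!(decide (j = j) : Bool))) = a
    rw [decide_eq_true (Eq.refl j), Bool.not_true, upd_ind_false j]
    exact h1
  · intro ε hε hne
    show z (Function.update ε j (!(ε j)))
        = z (Function.update (Function.update ε j true) j (!(Function.update ε j true j)))
    rw [hε, Bool.not_false, Function.update_self, Bool.not_true, Function.update_idem]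
    have h4 : Function.update ε j false = ε := by
      conv_rhs => rw [← Function.update_eq_self j ε]
      rw [hε]
    rw [h4]
    exact (h3 ε hε hne).symm

lemma relRT_map {Z : Type*} [TopologicalSpace Z] (S : Fin d → Z ≃ₜ Z) (g : X → Z)
    (hgc : Continuous g) (hg : ∀ i x, g (T i x) = S i (g x)) {j : Fin d} {a b : X}
    (h : (a, b) ∈ relRT T j) : (g a, g b) ∈ relRT S j := by
  obtain ⟨z, hz, h1, h2, h3⟩ := h
  exact ⟨fun ε => g (z ε), cubes_map_mem S g hgc hg hz, by show g _ = _; rw [h1],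
    by show g _ = _; rw [h2], fun ε hε hne => by show g _ = g _; rw [h3 ε hε hne]⟩

lemma rpRel_map {Z : Type*} [TopologicalSpace Z] (S : Fin d → Z ≃ₜ Z) (g : X → Z)
    (hgc : Continuous g) (hg : ∀ i x, g (T i x) = S i (g x)) {a b : X}
    (h : rpRel T a b) : rpRel S (g a) (g b) :=
  Set.mem_iInter.2 fun j => relRT_map S g hgc hg (Set.mem_iInter.1 h j)

lemma rpRel_symm (hc : ∀ i j : Fin d, Commute (T i) (T j)) {a b : X}
    (h : rpRel T a b) : rpRel T b a :=
  Set.mem_iInter.2 fun j => relRT_symm hc (Set.mem_iInter.1 h j)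

lemma relRT_isClosed [CompactSpace X] [T2Space X] (j : Fin d) : IsClosed (relRT T j) := by
  have hK : IsClosed (cubes T ∩ ⋂ ε : Fin d → Bool,
      {z : (Fin d → Bool) → X | ε j = false → ε ≠ (fun _ => false) →
        z ε = z (Function.update ε j true)}) := by
    refine isClosed_closure.inter (isClosed_iInter fun ε => ?_)
    by_cases h1 : ε j = false
    · by_cases h2 : ε ≠ (fun _ => false)
      · have he : {z : (Fin d → Bool) → X | ε j = false → ε ≠ (fun _ => false) →
            z ε = z (Function.update ε j true)}
            = {z | z ε = z (Function.update ε j true)} := by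
          ext z; simp [h1, h2]
        rw [he]
        exact isClosed_eq (continuous_apply _) (continuous_apply _)
      · push_neg at h2
        have he : {z : (Fin d → Bool) → X | ε j = false → ε ≠ (fun _ => false) →
            z ε = z (Function.update ε j true)} = univ :=
          eq_univ_of_forall fun z _ hne => absurd h2 hne
        rw [he]; exact isClosed_univ
    · have he : {z : (Fin d → Bool) → X | ε j = false → ε ≠ (fun _ => false) →
          z ε = z (Function.update ε j true)} = univ :=
        eq_univ_of_forall fun z hh => absurd hh h1
      rw [he]; exact isClosed_univ
  have himg : relRT T j = (fun z : (Fin d → Bool) → X =>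
      (z (fun _ => false), z (fun i => decide (i = j)))) '' (cubes T ∩ ⋂ ε : Fin d → Bool,
      {z : (Fin d → Bool) → X | ε j = false → ε ≠ (fun _ => false) →
        z ε = z (Function.update ε j true)}) := by
    ext p
    constructor
    · rintro ⟨z, hz, h1, h2, h3⟩
      exact ⟨z, ⟨hz, Set.mem_iInter.2 fun ε hε hne => h3 ε hε hne⟩,
        Prod.ext h1 h2⟩
    · rintro ⟨z, ⟨hz, hd⟩, rfl⟩
      exact ⟨z, hz, rfl, rfl, fun ε hε hne => Set.mem_iInter.1 hd ε hε hne⟩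
  rw [himg]
  exact (hK.isCompact.image ((continuous_apply _).prodMk (continuous_apply _))).isClosed

lemma relRP_isClosed [CompactSpace X] [T2Space X] : IsClosed (relRP T) :=
  isClosed_iInter fun j => relRT_isClosed j

end Rel

set_option linter.unusedSectionVars false

section Quot

variable {X : Type*} [MetricSpace X] [CompactSpace X] {T : Fin d → X ≃ₜ X}

lemma hcomm_apply (hc : ∀ i j : Fin d, Commute (T i) (T j)) (i k : Fin d) (x : X) :
    T i (T k x) = T k (T i x) := by
  have := congrArg (fun f : X ≃ₜ X => f x) (hc i k).eq
  simpa using this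

lemma hcomm_symm_apply (hc : ∀ i j : Fin d, Commute (T i) (T j)) (i k : Fin d) (x : X) :
    (T i).symm (T k x) = T k ((T i).symm x) := by
  apply (T i).injective
  rw [Homeomorph.apply_symm_apply, hcomm_apply hc i k ((T i).symm x),
    Homeomorph.apply_symm_apply]

lemma quot_mk_eq_iff (hEq : Equivalence (rpRel T)) {a b : X} :
    Quot.mk (rpRel T) a = Quot.mk (rpRel T) b ↔ rpRel T a b := by
  rw [Quot.eq]
  exact hEq.eqvGen_iff

lemma relRP_isClosed' : IsClosed {p : X × X | rpRel T p.1 p.2} := by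
  exact relRP_isClosed (T := T)

lemma isClosedMap_quot_mk (hEq : Equivalence (rpRel T)) :
    IsClosedMap (Quot.mk (rpRel T)) := by
  intro C hC
  rw [← isQuotientMap_quot_mk.isClosed_preimage]
  have hpre : Quot.mk (rpRel T) ⁻¹' (Quot.mk (rpRel T) '' C) =
      Prod.fst '' ({p : X × X | rpRel T p.1 p.2} ∩ Prod.snd ⁻¹' C) := by
    ext x
    simp only [mem_preimage, mem_image, mem_inter_iff, mem_setOf_eq]
    constructor
    · rintro ⟨c, hcC, hce⟩
      exact ⟨(x, c), ⟨(quot_mk_eq_iff hEq).1 hce.symm, hcC⟩, rfl⟩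
    · rintro ⟨p, ⟨hr, hpC⟩, rfl⟩
      exact ⟨p.2, hpC, ((quot_mk_eq_iff hEq).2 hr).symm⟩
  rw [hpre]
  exact ((relRP_isClosed'.inter (hC.preimage continuous_snd)).isCompact.image
    continuous_fst).isClosed

lemma t2_quot (hEq : Equivalence (rpRel T)) : T2Space (Quot (rpRel T)) := by
  rw [t2Space_iff]
  intro xq yq hne
  obtain ⟨a, rfl⟩ := Quot.exists_rep xq
  obtain ⟨b, rfl⟩ := Quot.exists_rep yq
  have hr : ¬ rpRel T a b := fun h => hne (Quot.sound h)
  have hA : IsClosed {x : X | rpRel T x a} :=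
    relRP_isClosed'.preimage (continuous_id.prodMk continuous_const)
  have hB : IsClosed {x : X | rpRel T x b} :=
    relRP_isClosed'.preimage (continuous_id.prodMk continuous_const)
  have hdis : Disjoint {x : X | rpRel T x a} {x : X | rpRel T x b} := by
    rw [Set.disjoint_left]
    intro x hxa hxb
    exact hr (hEq.trans (hEq.symm hxa) hxb)
  obtain ⟨U, V, hU, hV, hAU, hBV, hUV⟩ := NormalSpace.normal _ _ hA hB hdis
  refine ⟨(Quot.mk (rpRel T) '' Uᶜ)ᶜ, (Quot.mk (rpRel T) '' Vᶜ)ᶜ,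
    (isClosedMap_quot_mk hEq _ hU.isClosed_compl).isOpen_compl,
    (isClosedMap_quot_mk hEq _ hV.isClosed_compl).isOpen_compl, ?_, ?_, ?_⟩
  · intro hmem
    obtain ⟨u, huU, hue⟩ := hmem
    exact huU (hAU ((quot_mk_eq_iff hEq).1 hue))
  · intro hmem
    obtain ⟨v, hvV, hve⟩ := hmem
    exact hvV (hBV ((quot_mk_eq_iff hEq).1 hve))
  · rw [Set.disjoint_left]
    intro q hqU hqV
    obtain ⟨c, rfl⟩ := Quot.exists_rep q
    have hcU : c ∈ U := by
      by_contra hcU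
      exact hqU ⟨c, hcU, rfl⟩
    have hcV : c ∈ V := by
      by_contra hcV
      exact hqV ⟨c, hcV, rfl⟩
    exact Set.disjoint_left.1 hUV hcU hcV

noncomputable def quotHomeo (T : Fin d → X ≃ₜ X) (hc : ∀ i j : Fin d, Commute (T i) (T j)) :
    Fin d → (Quot (rpRel T) ≃ₜ Quot (rpRel T)) := fun i =>
  { toFun := Quot.lift (fun x => Quot.mk (rpRel T) (T i x))
      (fun _ _ hab => Quot.sound
        (rpRel_map T (T i) (T i).continuous (fun k x => hcomm_apply hc i k x) hab))
    invFun := Quot.lift (fun x => Quot.mk (rpRel T) ((T i).symm x))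
      (fun _ _ hab => Quot.sound
        (rpRel_map T (T i).symm (T i).symm.continuous
          (fun k x => hcomm_symm_apply hc i k x) hab))
    left_inv := fun q => by
      induction q using Quot.ind with
      | _ x => exact congrArg (Quot.mk (rpRel T)) ((T i).symm_apply_apply x)
    right_inv := fun q => by
      induction q using Quot.ind with
      | _ x => exact congrArg (Quot.mk (rpRel T)) ((T i).apply_symm_apply x)
    continuous_toFun := continuous_quot_lift _ (continuous_quot_mk.comp (T i).continuous)
    continuous_invFun := continuous_quot_lift _ (continuous_quot_mk.comp (T i).symm.continuous) }

lemma quotHomeo_mk (hc : ∀ i j : Fin d, Commute (T i) (T j)) (i : Fin d) (x : X) :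
    quotHomeo T hc i (Quot.mk (rpRel T) x) = Quot.mk (rpRel T) (T i x) := by
  show (quotHomeo T hc i).toEquiv.toFun (Quot.mk (rpRel T) x) = Quot.mk (rpRel T) (T i x)
  rfl

lemma cubes_quot_eq (hc : ∀ i j : Fin d, Commute (T i) (T j)) (hEq : Equivalence (rpRel T)) :
    cubes (quotHomeo T hc)
      = (fun (z : (Fin d → Bool) → X) (ε : Fin d → Bool) => Quot.mk (rpRel T) (z ε))
          '' cubes T := by
  haveI := t2_quot hEq
  apply Set.Subset.antisymm
  · have hcpt : IsCompact ((fun (z : (Fin d → Bool) → X) (ε : Fin d → Bool) =>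
        Quot.mk (rpRel T) (z ε)) '' cubes T) :=
      (isClosed_closure.isCompact).image
        (continuous_pi fun ε => continuous_quot_mk.comp (continuous_apply ε))
    refine closure_minimal ?_ hcpt.isClosed
    rintro y ⟨q, n, hy⟩
    obtain ⟨x, rfl⟩ := Quot.exists_rep q
    refine ⟨fun ε => cubeMap T n ε x, subset_closure ⟨x, n, fun _ => rfl⟩, ?_⟩
    funext ε
    show Quot.mk (rpRel T) (cubeMap T n ε x) = y ε
    rw [hy ε, cubeMap_eq_mprod, cubeMap_eq_mprod]
    exact mprod_intertwine (quotHomeo T hc) (Quot.mk (rpRel T)) (fun i x => (quotHomeo_mk hc i x).symm) _ x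
  · rintro _ ⟨z, hz, rfl⟩
    exact cubes_map_mem (quotHomeo T hc) (Quot.mk (rpRel T)) continuous_quot_mk
      (fun i x => (quotHomeo_mk hc i x).symm) hz

lemma hasUCP_quot (hc : ∀ i j : Fin d, Commute (T i) (T j)) (hEq : Equivalence (rpRel T))
    (hclose : ∀ z ∈ cubes T, ∀ w ∈ cubes T, ∀ ε₀ : Fin d → Bool,
      (∀ ε, ε ≠ ε₀ → rpRel T (z ε) (w ε)) → rpRel T (z ε₀) (w ε₀)) :
    HasUCP (quotHomeo T hc) := by
  intro xq hx yq hy ε₀ hagree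
  rw [cubes_quot_eq hc hEq] at hx hy
  obtain ⟨z, hz, rfl⟩ := hx
  obtain ⟨w, hw, rfl⟩ := hy
  have hr : ∀ ε, ε ≠ ε₀ → rpRel T (z ε) (w ε) := fun ε hε =>
    (quot_mk_eq_iff hEq).1 (hagree ε hε)
  funext ε
  show Quot.mk (rpRel T) (z ε) = Quot.mk (rpRel T) (w ε)
  by_cases hε : ε = ε₀
  · subst hε
    exact (quot_mk_eq_iff hEq).2 (hclose z hz w hw ε hr)
  · exact hagree ε hε

end Quot

section GenGroup

variable {X : Type*} [TopologicalSpace X] {T : Fin d → X ≃ₜ X}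

lemma hcomm_apply' (hc : ∀ i j : Fin d, Commute (T i) (T j)) (i k : Fin d) (x : X) :
    T i (T k x) = T k (T i x) := by
  have := congrArg (fun f : X ≃ₜ X => f x) (hc i k).eq
  simpa using this

lemma mprod_mem_genGroup (a : Fin d → ℤ) : mprod T a ∈ genGroup T := by
  apply Subgroup.list_prod_mem
  intro x hx
  obtain ⟨i, _, rfl⟩ := List.mem_map.mp hx
  exact zpow_mem (Subgroup.subset_closure (Set.mem_range_self i)) _

lemma genGroup_comm (hc : ∀ i j : Fin d, Commute (T i) (T j)) {g : X ≃ₜ X}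
    (hg : g ∈ genGroup T) : ∀ (i : Fin d) (x : X), g (T i x) = T i (g x) := by
  induction hg using Subgroup.closure_induction with
  | mem h hh =>
    obtain ⟨k, rfl⟩ := hh
    exact fun i x => hcomm_apply' hc k i x
  | one => exact fun i x => rfl
  | mul g₁ g₂ hg₁ hg₂ ih₁ ih₂ =>
    intro i x
    show g₁ (g₂ (T i x)) = T i (g₁ (g₂ x))
    rw [ih₂ i x, ih₁ i _]
  | inv g hgm ih =>
    intro i x
    show g.symm (T i x) = T i (g.symm x)
    apply g.injective
    rw [g.apply_symm_apply]
    have h2 := ih i (g.symm x)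
    rw [g.apply_symm_apply] at h2
    exact h2.symm

lemma genGroup_mprod_comm (hc : ∀ i j : Fin d, Commute (T i) (T j)) {g : X ≃ₜ X}
    (hg : g ∈ genGroup T) (a : Fin d → ℤ) (x : X) :
    g (mprod T a x) = mprod T a (g x) :=
  mprod_intertwine T (⇑g) (fun i x => genGroup_comm hc hg i x) a x

end GenGroup

section MoreCubes

variable {X : Type*} [TopologicalSpace X] {T : Fin d → X ≃ₜ X}

/-- exponent vector of a face move: `m ⊙ ε`. -/
lemma cubeMap_xor (hc : ∀ i j : Fin d, Commute (T i) (T j)) (n : Fin d → ℤ)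
    (η : Fin d → Bool) (ε : Fin d → Bool) (x : X) :
    cubeMap T n (fun i => xor (η i) (ε i)) x
      = cubeMap T (fun i => if η i then -(n i) else n i) ε (cubeMap T n η x) := by
  rw [cubeMap_eq_mprod, cubeMap_eq_mprod, cubeMap_eq_mprod, mprod_apply_mprod hc]
  have he : (fun i => if (xor (η i) (ε i)) = true then n i else 0)
      = ((fun i => if ε i = true then (if η i then -(n i) else n i) else 0) +
         (fun i => if η i = true then n i else 0)) := by
    funext i
    cases hη : η i <;> cases hε : ε i <;> simp [hη, hε]
  rw [he]

lemma cubes_xor_mem (hc : ∀ i j : Fin d, Commute (T i) (T j)) (η : Fin d → Bool) {z}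
    (hz : z ∈ cubes T) : (fun ε => z (fun i => xor (η i) (ε i))) ∈ cubes T := by
  have hF : Continuous (fun (z : (Fin d → Bool) → X) (ε : Fin d → Bool) =>
      z (fun i => xor (η i) (ε i))) := continuous_pi fun ε => continuous_apply _
  refine map_mem_closure hF hz ?_
  rintro y ⟨x, n, hy⟩
  exact ⟨cubeMap T n η x, fun i => if η i then -(n i) else n i,
    fun ε => by
      show y (fun i => xor (η i) (ε i)) = _
      rw [hy _, cubeMap_xor hc]⟩

/-- applying a "face translation" preserves the cube space. -/
lemma cubes_face_mem (hc : ∀ i j : Fin d, Commute (T i) (T j)) (m : Fin d → ℤ) {z}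
    (hz : z ∈ cubes T) :
    (fun ε => mprod T (fun i => if ε i then m i else 0) (z ε)) ∈ cubes T := by
  have hF : Continuous (fun (z : (Fin d → Bool) → X) (ε : Fin d → Bool) =>
      mprod T (fun i => if ε i then m i else 0) (z ε)) :=
    continuous_pi fun ε => (mprod T _).continuous.comp (continuous_apply _)
  refine map_mem_closure hF hz ?_
  rintro y ⟨x, n, hy⟩
  refine ⟨x, n + m, fun ε => ?_⟩
  show mprod T (fun i => if ε i then m i else 0) (y ε) = _
  rw [hy ε, cubeMap_eq_mprod, cubeMap_eq_mprod, mprod_apply_mprod hc]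
  have he : ((fun i => if ε i = true then m i else 0) + fun i => if ε i = true then n i else 0)
      = (fun i => if ε i = true then (n + m) i else 0) := by
    funext i
    cases hε : ε i <;> simp [hε, add_comm]
  rw [he]

end MoreCubes

section Ellis

variable {X : Type*} [TopologicalSpace X]

/-- the pair space on which the synchronized pair-system acts. -/
abbrev PairSp (X : Type*) (d : ℕ) := (((Fin d → Bool) → X) × ((Fin d → Bool) → X))

/-- a synchronized pair transformation: common diagonal element `g`, independent face moves. -/
def pairMap (T : Fin d → X ≃ₜ X) (g : X ≃ₜ X) (m₁ m₂ : Fin d → ℤ) :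
    PairSp X d → PairSp X d :=
  fun u => (fun ε => mprod T (fun i => if ε i then m₁ i else 0) (g (u.1 ε)),
            fun ε => mprod T (fun i => if ε i then m₂ i else 0) (g (u.2 ε)))

/-- the generating set of the enveloping semigroup of the pair system. -/
def pairGen (T : Fin d → X ≃ₜ X) : Set (PairSp X d → PairSp X d) :=
  {Ξ | ∃ g ∈ genGroup T, ∃ m₁ m₂ : Fin d → ℤ, Ξ = pairMap T g m₁ m₂}

/-- the enveloping (Ellis) semigroup of the synchronized pair system. -/
def ellis2 (T : Fin d → X ≃ₜ X) : Set (PairSp X d → PairSp X d) :=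
  closure (pairGen T)

variable {T : Fin d → X ≃ₜ X}

variable [T2Space X]

lemma pairMap_continuous (g : X ≃ₜ X) (m₁ m₂ : Fin d → ℤ) :
    Continuous (pairMap T g m₁ m₂) := by
  apply Continuous.prodMk
  · exact continuous_pi fun ε => (mprod T _).continuous.comp
      (g.continuous.comp ((continuous_apply ε).comp continuous_fst))
  · exact continuous_pi fun ε => (mprod T _).continuous.comp
      (g.continuous.comp ((continuous_apply ε).comp continuous_snd))

lemma pairMap_comp (hc : ∀ i j : Fin d, Commute (T i) (T j)) {g g' : X ≃ₜ X}
    (hg : g ∈ genGroup T) (m₁ m₂ m₁' m₂' : Fin d → ℤ) :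
    pairMap T g m₁ m₂ ∘ pairMap T g' m₁' m₂'
      = pairMap T (g * g') (m₁ + m₁') (m₂ + m₂') := by
  funext u
  have key : ∀ (m m' : Fin d → ℤ) (y : X) (ε : Fin d → Bool),
      mprod T (fun i => if ε i then m i else 0)
        (g (mprod T (fun i => if ε i then m' i else 0) (g' y)))
      = mprod T (fun i => if ε i then (m + m') i else 0) ((g * g') y) := by
    intro m m' y ε
    rw [genGroup_mprod_comm hc hg, mprod_apply_mprod hc]
    have he : ((fun i => if ε i then m i else 0) + fun i => if ε i then m' i else 0)
        = (fun i => if ε i then (m + m') i else 0) := by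
      funext i
      cases hε : ε i <;> simp [hε]
    rw [he]
    rfl
  refine Prod.ext ?_ ?_
  · funext ε
    exact key m₁ m₁' (u.1 ε) ε
  · funext ε
    exact key m₂ m₂' (u.2 ε) ε

lemma pairMap_one : pairMap T 1 0 0 = id := by
  funext u
  have key : ∀ (y : X) (ε : Fin d → Bool),
      mprod T (fun i => if ε i then (0 : Fin d → ℤ) i else 0) ((1 : X ≃ₜ X) y) = y := by
    intro y ε
    have he : (fun i => if ε i then (0 : Fin d → ℤ) i else 0) = fun _ => (0:ℤ) := by
      funext i
      cases hε : ε i <;> simp [hε]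
    rw [he, mprod_zero]
    rfl
  exact Prod.ext (funext fun ε => key (u.1 ε) ε) (funext fun ε => key (u.2 ε) ε)

lemma id_mem_pairGen : id ∈ pairGen T :=
  ⟨1, one_mem _, 0, 0, pairMap_one.symm⟩

lemma pairGen_subset_ellis2 : pairGen T ⊆ ellis2 T := subset_closure

lemma pairGen_comp_mem (hc : ∀ i j : Fin d, Commute (T i) (T j)) {Ξ Φ}
    (hΞ : Ξ ∈ pairGen T) (hΦ : Φ ∈ pairGen T) : Ξ ∘ Φ ∈ pairGen T := by
  obtain ⟨g, hg, m₁, m₂, rfl⟩ := hΞ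
  obtain ⟨g', hg', m₁', m₂', rfl⟩ := hΦ
  exact ⟨g * g', mul_mem hg hg', m₁ + m₁', m₂ + m₂', pairMap_comp hc hg _ _ _ _⟩

lemma ellis2_comp_mem (hc : ∀ i j : Fin d, Commute (T i) (T j)) {Θ Φ}
    (hΘ : Θ ∈ ellis2 T) (hΦ : Φ ∈ ellis2 T) : Θ ∘ Φ ∈ ellis2 T := by
  have stepa : ∀ {Ξ}, Ξ ∈ pairGen T → Ξ ∘ Φ ∈ ellis2 T := by
    intro Ξ hΞ
    obtain ⟨g, hg, m₁, m₂, rfl⟩ := hΞ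
    have hcont : Continuous (fun Φ' : PairSp X d → PairSp X d => pairMap T g m₁ m₂ ∘ Φ') :=
      continuous_pi fun u => (pairMap_continuous g m₁ m₂).comp (continuous_apply u)
    exact map_mem_closure hcont hΦ
      (fun Φ' hΦ' => pairGen_comp_mem hc ⟨g, hg, m₁, m₂, rfl⟩ hΦ')
  have hcont2 : Continuous (fun Θ' : PairSp X d → PairSp X d => Θ' ∘ Φ) :=
    continuous_pi fun u => continuous_apply (Φ u)
  have h3 := map_mem_closure hcont2 hΘ (fun Ξ hΞ => stepa hΞ)
  exact (isClosed_closure (s := pairGen T)).closure_subset h3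

lemma ellis2_cond1 {Θ} (hΘ : Θ ∈ ellis2 T) :
    ∀ (u uu : PairSp X d) (ε : Fin d → Bool), u.1 ε = uu.1 ε → (Θ u).1 ε = (Θ uu).1 ε := by
  have hcl : IsClosed {Ξ : PairSp X d → PairSp X d |
      ∀ (u uu : PairSp X d) (ε : Fin d → Bool), u.1 ε = uu.1 ε → (Ξ u).1 ε = (Ξ uu).1 ε} := by
    have : {Ξ : PairSp X d → PairSp X d |
        ∀ (u uu : PairSp X d) (ε : Fin d → Bool), u.1 ε = uu.1 ε → (Ξ u).1 ε = (Ξ uu).1 ε}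
        = ⋂ (u : PairSp X d), ⋂ (uu : PairSp X d), ⋂ (ε : Fin d → Bool),
          {Ξ | u.1 ε = uu.1 ε → (Ξ u).1 ε = (Ξ uu).1 ε} := by
      ext Ξ
      simp only [Set.mem_setOf_eq, Set.mem_iInter]
    rw [this]
    refine isClosed_iInter fun u => isClosed_iInter fun uu => isClosed_iInter fun ε => ?_
    by_cases h : u.1 ε = uu.1 ε
    · have he : {Ξ : PairSp X d → PairSp X d | u.1 ε = uu.1 ε → (Ξ u).1 ε = (Ξ uu).1 ε}
          = {Ξ | (Ξ u).1 ε = (Ξ uu).1 ε} := by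
        ext Ξ
        simp [h]
      rw [he]
      exact isClosed_eq ((continuous_apply ε).comp (continuous_fst.comp (continuous_apply u)))
        ((continuous_apply ε).comp (continuous_fst.comp (continuous_apply uu)))
    · have he : {Ξ : PairSp X d → PairSp X d | u.1 ε = uu.1 ε → (Ξ u).1 ε = (Ξ uu).1 ε}
          = Set.univ := eq_univ_of_forall fun Ξ hh => absurd hh h
      rw [he]
      exact isClosed_univ
  have hgen : pairGen T ⊆ {Ξ : PairSp X d → PairSp X d |
      ∀ (u uu : PairSp X d) (ε : Fin d → Bool), u.1 ε = uu.1 ε → (Ξ u).1 ε = (Ξ uu).1 ε} := by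
    rintro _ ⟨g, hg, m₁, m₂, rfl⟩ u uu ε h
    show mprod T _ (g (u.1 ε)) = mprod T _ (g (uu.1 ε))
    rw [h]
  exact closure_minimal hgen hcl hΘ

lemma ellis2_cond2 {Θ} (hΘ : Θ ∈ ellis2 T) :
    ∀ (u uu : PairSp X d) (ε : Fin d → Bool), u.2 ε = uu.2 ε → (Θ u).2 ε = (Θ uu).2 ε := by
  have hcl : IsClosed {Ξ : PairSp X d → PairSp X d |
      ∀ (u uu : PairSp X d) (ε : Fin d → Bool), u.2 ε = uu.2 ε → (Ξ u).2 ε = (Ξ uu).2 ε} := by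
    have : {Ξ : PairSp X d → PairSp X d |
        ∀ (u uu : PairSp X d) (ε : Fin d → Bool), u.2 ε = uu.2 ε → (Ξ u).2 ε = (Ξ uu).2 ε}
        = ⋂ (u : PairSp X d), ⋂ (uu : PairSp X d), ⋂ (ε : Fin d → Bool),
          {Ξ | u.2 ε = uu.2 ε → (Ξ u).2 ε = (Ξ uu).2 ε} := by
      ext Ξ
      simp only [Set.mem_setOf_eq, Set.mem_iInter]
    rw [this]
    refine isClosed_iInter fun u => isClosed_iInter fun uu => isClosed_iInter fun ε => ?_
    by_cases h : u.2 ε = uu.2 ε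
    · have he : {Ξ : PairSp X d → PairSp X d | u.2 ε = uu.2 ε → (Ξ u).2 ε = (Ξ uu).2 ε}
          = {Ξ | (Ξ u).2 ε = (Ξ uu).2 ε} := by
        ext Ξ
        simp [h]
      rw [he]
      exact isClosed_eq ((continuous_apply ε).comp (continuous_snd.comp (continuous_apply u)))
        ((continuous_apply ε).comp (continuous_snd.comp (continuous_apply uu)))
    · have he : {Ξ : PairSp X d → PairSp X d | u.2 ε = uu.2 ε → (Ξ u).2 ε = (Ξ uu).2 ε}
          = Set.univ := eq_univ_of_forall fun Ξ hh => absurd hh h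
      rw [he]
      exact isClosed_univ
  have hgen : pairGen T ⊆ {Ξ : PairSp X d → PairSp X d |
      ∀ (u uu : PairSp X d) (ε : Fin d → Bool), u.2 ε = uu.2 ε → (Ξ u).2 ε = (Ξ uu).2 ε} := by
    rintro _ ⟨g, hg, m₁, m₂, rfl⟩ u uu ε h
    show mprod T _ (g (u.2 ε)) = mprod T _ (g (uu.2 ε))
    rw [h]
  exact closure_minimal hgen hcl hΘ

lemma ellis2_sync {Θ} (hΘ : Θ ∈ ellis2 T) :
    ∀ (u : PairSp X d), u.1 (fun _ => false) = u.2 (fun _ => false) →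
      (Θ u).1 (fun _ => false) = (Θ u).2 (fun _ => false) := by
  have hcl : IsClosed {Ξ : PairSp X d → PairSp X d |
      ∀ (u : PairSp X d), u.1 (fun _ => false) = u.2 (fun _ => false) →
        (Ξ u).1 (fun _ => false) = (Ξ u).2 (fun _ => false)} := by
    have : {Ξ : PairSp X d → PairSp X d |
        ∀ (u : PairSp X d), u.1 (fun _ => false) = u.2 (fun _ => false) →
          (Ξ u).1 (fun _ => false) = (Ξ u).2 (fun _ => false)}
        = ⋂ (u : PairSp X d), {Ξ | u.1 (fun _ => false) = u.2 (fun _ => false) →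
            (Ξ u).1 (fun _ => false) = (Ξ u).2 (fun _ => false)} := by
      ext Ξ
      simp only [Set.mem_setOf_eq, Set.mem_iInter]
    rw [this]
    refine isClosed_iInter fun u => ?_
    by_cases h : u.1 (fun _ => false) = u.2 (fun _ => false)
    · have he : {Ξ : PairSp X d → PairSp X d | u.1 (fun _ => false) = u.2 (fun _ => false) →
          (Ξ u).1 (fun _ => false) = (Ξ u).2 (fun _ => false)}
          = {Ξ | (Ξ u).1 (fun _ => false) = (Ξ u).2 (fun _ => false)} := by
        ext Ξ
        simp [h]
      rw [he]
      exact isClosed_eq ((continuous_apply _).comp (continuous_fst.comp (continuous_apply u)))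
        ((continuous_apply _).comp (continuous_snd.comp (continuous_apply u)))
    · have he : {Ξ : PairSp X d → PairSp X d | u.1 (fun _ => false) = u.2 (fun _ => false) →
          (Ξ u).1 (fun _ => false) = (Ξ u).2 (fun _ => false)} = Set.univ :=
        eq_univ_of_forall fun Ξ hh => absurd hh h
      rw [he]
      exact isClosed_univ
  have hgen : pairGen T ⊆ {Ξ : PairSp X d → PairSp X d |
      ∀ (u : PairSp X d), u.1 (fun _ => false) = u.2 (fun _ => false) →
        (Ξ u).1 (fun _ => false) = (Ξ u).2 (fun _ => false)} := by
    rintro _ ⟨g, hg, m₁, m₂, rfl⟩ u h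
    show mprod T (fun i => if (false : Bool) then m₁ i else 0) (g (u.1 fun _ => false))
        = mprod T (fun i => if (false : Bool) then m₂ i else 0) (g (u.2 fun _ => false))
    have he1 : (fun i => if (false : Bool) then m₁ i else 0) = fun _ => (0:ℤ) := by
      funext i; simp
    have he2 : (fun i => if (false : Bool) then m₂ i else 0) = fun _ => (0:ℤ) := by
      funext i; simp
    rw [he1, he2, mprod_zero, h]
  exact closure_minimal hgen hcl hΘ

lemma ellis2_mapsTo (hc : ∀ i j : Fin d, Commute (T i) (T j)) {Θ} (hΘ : Θ ∈ ellis2 T) :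
    ∀ (u : PairSp X d), u.1 ∈ cubes T → u.2 ∈ cubes T →
      (Θ u).1 ∈ cubes T ∧ (Θ u).2 ∈ cubes T := by
  have hcl : IsClosed {Ξ : PairSp X d → PairSp X d |
      ∀ (u : PairSp X d), u.1 ∈ cubes T → u.2 ∈ cubes T →
        (Ξ u).1 ∈ cubes T ∧ (Ξ u).2 ∈ cubes T} := by
    have : {Ξ : PairSp X d → PairSp X d |
        ∀ (u : PairSp X d), u.1 ∈ cubes T → u.2 ∈ cubes T →
          (Ξ u).1 ∈ cubes T ∧ (Ξ u).2 ∈ cubes T}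
        = ⋂ (u : PairSp X d), {Ξ | u.1 ∈ cubes T → u.2 ∈ cubes T →
            (Ξ u).1 ∈ cubes T ∧ (Ξ u).2 ∈ cubes T} := by
      ext Ξ
      simp only [Set.mem_setOf_eq, Set.mem_iInter]
    rw [this]
    refine isClosed_iInter fun u => ?_
    by_cases h1 : u.1 ∈ cubes T
    · by_cases h2 : u.2 ∈ cubes T
      · have he : {Ξ : PairSp X d → PairSp X d | u.1 ∈ cubes T → u.2 ∈ cubes T →
            (Ξ u).1 ∈ cubes T ∧ (Ξ u).2 ∈ cubes T}
            = {Ξ | (Ξ u).1 ∈ cubes T ∧ (Ξ u).2 ∈ cubes T} := by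
          ext Ξ
          simp [h1, h2]
        rw [he]
        exact IsClosed.inter
          (isClosed_closure.preimage (continuous_fst.comp (continuous_apply u)))
          (isClosed_closure.preimage (continuous_snd.comp (continuous_apply u)))
      · have he : {Ξ : PairSp X d → PairSp X d | u.1 ∈ cubes T → u.2 ∈ cubes T →
            (Ξ u).1 ∈ cubes T ∧ (Ξ u).2 ∈ cubes T} = Set.univ :=
          eq_univ_of_forall fun Ξ _ hh => absurd hh h2
        rw [he]
        exact isClosed_univ
    · have he : {Ξ : PairSp X d → PairSp X d | u.1 ∈ cubes T → u.2 ∈ cubes T →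
          (Ξ u).1 ∈ cubes T ∧ (Ξ u).2 ∈ cubes T} = Set.univ :=
        eq_univ_of_forall fun Ξ hh => absurd hh h1
      rw [he]
      exact isClosed_univ
  have hgen : pairGen T ⊆ {Ξ : PairSp X d → PairSp X d |
      ∀ (u : PairSp X d), u.1 ∈ cubes T → u.2 ∈ cubes T →
        (Ξ u).1 ∈ cubes T ∧ (Ξ u).2 ∈ cubes T} := by
    rintro _ ⟨g, hg, m₁, m₂, rfl⟩ u h1 h2
    constructor
    · exact cubes_face_mem hc m₁
        (cubes_map_mem T (⇑g) g.continuous (fun i x => genGroup_comm hc hg i x) h1)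
    · exact cubes_face_mem hc m₂
        (cubes_map_mem T (⇑g) g.continuous (fun i x => genGroup_comm hc hg i x) h2)
  exact closure_minimal hgen hcl hΘ

lemma ellis2_swap {Θ} (hΘ : Θ ∈ ellis2 T) :
    (fun u : PairSp X d => ((Θ (u.2, u.1)).2, (Θ (u.2, u.1)).1)) ∈ ellis2 T := by
  have hcont : Continuous (fun (Ξ : PairSp X d → PairSp X d) =>
      (fun u : PairSp X d => ((Ξ (u.2, u.1)).2, (Ξ (u.2, u.1)).1))) :=
    continuous_pi fun u => Continuous.prodMk
      (continuous_snd.comp (continuous_apply (u.2, u.1)))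
      (continuous_fst.comp (continuous_apply (u.2, u.1)))
  refine map_mem_closure hcont hΘ ?_
  rintro _ ⟨g, hg, m₁, m₂, rfl⟩
  exact ⟨g, hg, m₂, m₁, rfl⟩

end Ellis

section EllisGroup

variable {X : Type*} [MetricSpace X] [CompactSpace X] {T : Fin d → X ≃ₜ X}

lemma ellis2_idem_id (hdist : IsDistalSystem T) {u : PairSp X d → PairSp X d}
    (hu : u ∈ ellis2 T) (huu : u ∘ u = u) : u = id := by
  have key1 : ∀ (y : PairSp X d), (u y).1 = y.1 := by
    intro y
    have huy : u (u y) = u y := congrFun huu y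
    by_contra hne
    obtain ⟨ε, hε⟩ := Function.ne_iff.mp hne
    obtain ⟨δ, hδ, hδle⟩ := hdist _ _ hε
    have hcont1 : Continuous (fun Ξ : PairSp X d → PairSp X d => (Ξ y).1 ε) :=
      (continuous_apply ε).comp (continuous_fst.comp (continuous_apply y))
    have hcont2 : Continuous (fun Ξ : PairSp X d → PairSp X d => (Ξ (u y)).1 ε) :=
      (continuous_apply ε).comp (continuous_fst.comp (continuous_apply (u y)))
    have hopen : IsOpen ((fun Ξ : PairSp X d → PairSp X d => (Ξ y).1 ε) ⁻¹'
        Metric.ball ((u y).1 ε) (δ/2) ∩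
        (fun Ξ : PairSp X d → PairSp X d => (Ξ (u y)).1 ε) ⁻¹'
        Metric.ball ((u y).1 ε) (δ/2)) :=
      (Metric.isOpen_ball.preimage hcont1).inter (Metric.isOpen_ball.preimage hcont2)
    have hmem : u ∈ (fun Ξ : PairSp X d → PairSp X d => (Ξ y).1 ε) ⁻¹'
        Metric.ball ((u y).1 ε) (δ/2) ∩
        (fun Ξ : PairSp X d → PairSp X d => (Ξ (u y)).1 ε) ⁻¹'
        Metric.ball ((u y).1 ε) (δ/2) := by
      constructor
      · exact Metric.mem_ball_self (by linarith)
      · show (u (u y)).1 ε ∈ Metric.ball ((u y).1 ε) (δ/2)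
        rw [huy]
        exact Metric.mem_ball_self (by linarith)
    obtain ⟨Ξ, hΞmem, hΞgen⟩ := _root_.mem_closure_iff.mp hu _ hopen hmem
    obtain ⟨g, hg, m₁, m₂, rfl⟩ := hΞgen
    have hmemh : (mprod T (fun i => if ε i then m₁ i else 0) * g) ∈ genGroup T :=
      mul_mem (mprod_mem_genGroup _) hg
    have hd := hδle _ hmemh
    have hv1 : dist ((mprod T (fun i => if ε i then m₁ i else 0) * g) (y.1 ε))
        ((u y).1 ε) < δ/2 := by
      have := hΞmem.1
      rw [Set.mem_preimage, Metric.mem_ball] at this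
      exact this
    have hv2 : dist ((mprod T (fun i => if ε i then m₁ i else 0) * g) ((u y).1 ε))
        ((u y).1 ε) < δ/2 := by
      have := hΞmem.2
      rw [Set.mem_preimage, Metric.mem_ball] at this
      exact this
    have htri := dist_triangle
      ((mprod T (fun i => if ε i then m₁ i else 0) * g) ((u y).1 ε))
      ((u y).1 ε)
      ((mprod T (fun i => if ε i then m₁ i else 0) * g) (y.1 ε))
    rw [dist_comm ((u y).1 ε)
      ((mprod T (fun i => if ε i then m₁ i else 0) * g) (y.1 ε))] at htri
    linarith
  have key2 : ∀ (y : PairSp X d), (u y).2 = y.2 := by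
    intro y
    have huy : u (u y) = u y := congrFun huu y
    by_contra hne
    obtain ⟨ε, hε⟩ := Function.ne_iff.mp hne
    obtain ⟨δ, hδ, hδle⟩ := hdist _ _ hε
    have hcont1 : Continuous (fun Ξ : PairSp X d → PairSp X d => (Ξ y).2 ε) :=
      (continuous_apply ε).comp (continuous_snd.comp (continuous_apply y))
    have hcont2 : Continuous (fun Ξ : PairSp X d → PairSp X d => (Ξ (u y)).2 ε) :=
      (continuous_apply ε).comp (continuous_snd.comp (continuous_apply (u y)))
    have hopen : IsOpen ((fun Ξ : PairSp X d → PairSp X d => (Ξ y).2 ε) ⁻¹'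
        Metric.ball ((u y).2 ε) (δ/2) ∩
        (fun Ξ : PairSp X d → PairSp X d => (Ξ (u y)).2 ε) ⁻¹'
        Metric.ball ((u y).2 ε) (δ/2)) :=
      (Metric.isOpen_ball.preimage hcont1).inter (Metric.isOpen_ball.preimage hcont2)
    have hmem : u ∈ (fun Ξ : PairSp X d → PairSp X d => (Ξ y).2 ε) ⁻¹'
        Metric.ball ((u y).2 ε) (δ/2) ∩
        (fun Ξ : PairSp X d → PairSp X d => (Ξ (u y)).2 ε) ⁻¹'
        Metric.ball ((u y).2 ε) (δ/2) := by
      constructor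
      · exact Metric.mem_ball_self (by linarith)
      · show (u (u y)).2 ε ∈ Metric.ball ((u y).2 ε) (δ/2)
        rw [huy]
        exact Metric.mem_ball_self (by linarith)
    obtain ⟨Ξ, hΞmem, hΞgen⟩ := _root_.mem_closure_iff.mp hu _ hopen hmem
    obtain ⟨g, hg, m₁, m₂, rfl⟩ := hΞgen
    have hmemh : (mprod T (fun i => if ε i then m₂ i else 0) * g) ∈ genGroup T :=
      mul_mem (mprod_mem_genGroup _) hg
    have hd := hδle _ hmemh
    have hv1 : dist ((mprod T (fun i => if ε i then m₂ i else 0) * g) (y.2 ε))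
        ((u y).2 ε) < δ/2 := by
      have := hΞmem.1
      rw [Set.mem_preimage, Metric.mem_ball] at this
      exact this
    have hv2 : dist ((mprod T (fun i => if ε i then m₂ i else 0) * g) ((u y).2 ε))
        ((u y).2 ε) < δ/2 := by
      have := hΞmem.2
      rw [Set.mem_preimage, Metric.mem_ball] at this
      exact this
    have htri := dist_triangle
      ((mprod T (fun i => if ε i then m₂ i else 0) * g) ((u y).2 ε))
      ((u y).2 ε)
      ((mprod T (fun i => if ε i then m₂ i else 0) * g) (y.2 ε))
    rw [dist_comm ((u y).2 ε)
      ((mprod T (fun i => if ε i then m₂ i else 0) * g) (y.2 ε))] at htri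
    linarith
  funext y
  exact Prod.ext (key1 y) (key2 y)

lemma ellis2_exists_inverse (hc : ∀ i j : Fin d, Commute (T i) (T j))
    (hdist : IsDistalSystem T) {Θ : PairSp X d → PairSp X d} (hΘ : Θ ∈ ellis2 T) :
    ∃ Λ ∈ ellis2 T, Λ ∘ Θ = id ∧ Θ ∘ Λ = id := by
  have hE2cpt : IsCompact (ellis2 T) := (isClosed_closure (s := pairGen T)).isCompact
  have hleft : ∀ {Θ' : PairSp X d → PairSp X d}, Θ' ∈ ellis2 T →
      ∃ Λ ∈ ellis2 T, Λ ∘ Θ' = id := by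
    intro Θ' hΘ'
    have hLc : IsCompact ((fun Λ => Λ ∘ Θ') '' ellis2 T) :=
      hE2cpt.image (continuous_pi fun uarg => continuous_apply (Θ' uarg))
    have hLsub : (fun Λ => Λ ∘ Θ') '' ellis2 T ⊆ ellis2 T := by
      rintro _ ⟨Λ, hΛ, rfl⟩
      exact ellis2_comp_mem hc hΛ hΘ'
    have hLne : ((fun Λ => Λ ∘ Θ') '' ellis2 T).Nonempty :=
      ⟨id ∘ Θ', id, pairGen_subset_ellis2 id_mem_pairGen, rfl⟩
    have hLmul : ∀ a ∈ (fun Λ => Λ ∘ Θ') '' ellis2 T, ∀ b ∈ (fun Λ => Λ ∘ Θ') '' ellis2 T,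
        a ∘ b ∈ (fun Λ => Λ ∘ Θ') '' ellis2 T := by
      rintro _ ⟨Λ₁, h1, rfl⟩ _ ⟨Λ₂, h2, rfl⟩
      exact ⟨Λ₁ ∘ Θ' ∘ Λ₂, ellis2_comp_mem hc h1 (ellis2_comp_mem hc hΘ' h2), rfl⟩
    letI : Semigroup ↥((fun Λ => Λ ∘ Θ') '' ellis2 T) :=
      { mul := fun a b => ⟨a.1 ∘ b.1, hLmul _ a.2 _ b.2⟩
        mul_assoc := fun _ _ _ => Subtype.ext rfl }
    haveI : CompactSpace ↥((fun Λ => Λ ∘ Θ') '' ellis2 T) :=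
      isCompact_iff_compactSpace.mp hLc
    haveI : Nonempty ↥((fun Λ => Λ ∘ Θ') '' ellis2 T) := hLne.to_subtype
    have hmul_left : ∀ r : ↥((fun Λ => Λ ∘ Θ') '' ellis2 T),
        Continuous (fun p : ↥((fun Λ => Λ ∘ Θ') '' ellis2 T) => p * r) := by
      intro r
      refine Continuous.subtype_mk ?_ _
      exact continuous_pi fun uarg => (continuous_apply (r.1 uarg)).comp continuous_subtype_val
    obtain ⟨m, hm⟩ := exists_idempotent_of_compact_t2_of_continuous_mul_left hmul_left
    have hmid : m.1 = id :=
      ellis2_idem_id hdist (hLsub m.2) (congrArg Subtype.val hm)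
    obtain ⟨Λ, hΛ, hΛeq⟩ := m.2
    exact ⟨Λ, hΛ, by rw [show Λ ∘ Θ' = m.1 from hΛeq, hmid]⟩
  obtain ⟨Λ, hΛ, hΛΘ⟩ := hleft hΘ
  obtain ⟨Λ', hΛ', hΛ'Λ⟩ := hleft hΛ
  have hΘeq : Θ = Λ' := by
    have h2 : (Λ' ∘ Λ) ∘ Θ = Λ' ∘ (Λ ∘ Θ) := rfl
    rw [hΛ'Λ, hΛΘ] at h2
    simpa using h2
  refine ⟨Λ, hΛ, hΛΘ, ?_⟩
  rw [hΘeq]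
  exact hΛ'Λ

end EllisGroup

section ClaimA

variable {X : Type*} [MetricSpace X] [CompactSpace X] {T : Fin d → X ≃ₜ X}

lemma ellis2_claimA (hc : ∀ i j : Fin d, Commute (T i) (T j)) (hmin : IsMinimalSystem T)
    {w : (Fin d → Bool) → X} (hw : w ∈ cubes T) :
    ∃ P ∈ ellis2 T,
      P ((fun _ => w (fun _ => false)), (fun _ => w (fun _ => false)))
        = (w, fun _ => w (fun _ => false)) := by
  classical
  set b := w (fun _ => false) with hb
  let I := {g : X ≃ₜ X // g ∈ genGroup T} × (Fin d → ℤ)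
  let ev1 : I → ((Fin d → Bool) → X) :=
    fun p ε => mprod T (fun i => if ε i then p.2 i else 0) (p.1.1 b)
  have hwcl : w ∈ closure (Set.range ev1) := by
    have hbasic : {y : (Fin d → Bool) → X |
        ∃ (x : X) (n : Fin d → ℤ), ∀ ε, y ε = cubeMap T n ε x}
        ⊆ closure (Set.range ev1) := by
      rintro y ⟨x, n, hy⟩
      have hyx : y = fun ε => mprod T (fun i => if ε i then n i else 0) x := by
        funext ε; rw [hy ε, cubeMap_eq_mprod]
      have hΦc : Continuous
          (fun x' : X => (fun ε : Fin d → Bool => mprod T (fun i => if ε i then n i else 0) x')) :=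
        continuous_pi fun ε => (mprod T _).continuous
      have hxcl : x ∈ closure {y : X | ∃ g ∈ genGroup T, g b = y} := (hmin b) x
      have hmapsto : Set.MapsTo
          (fun x' : X => (fun ε : Fin d → Bool => mprod T (fun i => if ε i then n i else 0) x'))
          {y : X | ∃ g ∈ genGroup T, g b = y} (Set.range ev1) := by
        rintro _ ⟨g, hg, rfl⟩
        exact ⟨(⟨g, hg⟩, n), rfl⟩
      have hmem := map_mem_closure hΦc hxcl hmapsto
      rw [hyx]
      exact hmem
    exact closure_minimal hbasic isClosed_closure hw
  have hne : Filter.NeBot (Filter.comap ev1 (nhds w)) := by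
    refine Filter.comap_neBot fun t ht => ?_
    obtain ⟨y, hyt, hyr⟩ := mem_closure_iff_nhds.mp hwcl t ht
    obtain ⟨i, rfl⟩ := hyr
    exact ⟨i, hyt⟩
  let U : Ultrafilter I := @Ultrafilter.of I (Filter.comap ev1 (nhds w)) hne
  have hT1 : Filter.Tendsto ev1 U (nhds w) :=
    le_trans (Filter.map_mono (@Ultrafilter.of_le I _ hne)) Filter.map_comap_le
  let ι : I → (PairSp X d → PairSp X d) := fun p => pairMap T p.1.1 p.2 0
  have hι : ∀ i : I, ι i ∈ ellis2 T := fun p =>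
    pairGen_subset_ellis2 ⟨p.1.1, p.1.2, p.2, 0, rfl⟩
  have hE2cpt : IsCompact (ellis2 T) := (isClosed_closure (s := pairGen T)).isCompact
  have hUle : ↑(U.map ι) ≤ Filter.principal (ellis2 T) := by
    rw [Filter.le_principal_iff, Ultrafilter.coe_map, Filter.mem_map]
    exact Filter.univ_mem' fun i => hι i
  obtain ⟨P, hPmem, hPle⟩ := hE2cpt.ultrafilter_le_nhds (U.map ι) hUle
  have hι_tendsto : Filter.Tendsto ι U (nhds P) := by
    rw [Filter.Tendsto, ← Ultrafilter.coe_map]; exact hPle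
  have hTP : Filter.Tendsto
      (fun i => ι i ((fun _ => b), (fun _ => b))) U
      (nhds (P ((fun _ => b), (fun _ => b)))) :=
    ((continuous_apply ((fun _ : Fin d → Bool => b), (fun _ : Fin d → Bool => b))).tendsto
      P).comp hι_tendsto
  have hfun1 : (fun i => (ι i ((fun _ => b), (fun _ => b))).1) = ev1 := by
    funext i; funext ε; rfl
  have hTw : Filter.Tendsto (fun i => ι i ((fun _ => b), (fun _ => b))) U
      (nhds (w, (fun _ => b))) := by
    have heta : (fun i => ι i ((fun _ => b), (fun _ => b)))
        = fun i => ((ι i ((fun _ => b), (fun _ => b))).1,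
                    (ι i ((fun _ => b), (fun _ => b))).2) := rfl
    rw [heta]
    apply Filter.Tendsto.prodMk_nhds
    · rw [hfun1]; exact hT1
    · rw [tendsto_pi_nhds]
      intro ε
      have hfun2 : (fun i : I => (ι i ((fun _ => b), (fun _ => b))).2 ε)
          = fun i => ev1 i (fun _ => false) := by
        funext i
        show mprod T (fun j => if ε j then (0 : Fin d → ℤ) j else 0) (i.1.1 b)
            = mprod T (fun j => if (false : Bool) then i.2 j else 0) (i.1.1 b)
        have h1 : (fun j => if ε j then (0 : Fin d → ℤ) j else 0) = fun _ => (0:ℤ) := by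
          funext j; cases hj : ε j <;> simp [hj]
        have h2 : (fun j => if (false : Bool) then i.2 j else 0) = fun _ => (0:ℤ) := by
          funext j; simp
        rw [h1, h2]
      rw [hfun2]
      exact ((continuous_apply (fun _ : Fin d => false)).tendsto w).comp hT1
  exact ⟨P, hPmem, tendsto_nhds_unique hTP hTw⟩

end ClaimA

section Tool

variable {X : Type*} [MetricSpace X] [CompactSpace X] {T : Fin d → X ≃ₜ X}

/-- the "base map" of a pair transformation. -/
def zmap (Ξ : PairSp X d → PairSp X d) : X → X :=
  fun x => (Ξ ((fun _ => x), (fun _ => x))).1 (fun _ => false)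

lemma zmap_eval1 {Θ : PairSp X d → PairSp X d} (hΘ : Θ ∈ ellis2 T) (u : PairSp X d) :
    (Θ u).1 (fun _ => false) = zmap Θ (u.1 (fun _ => false)) :=
  ellis2_cond1 hΘ u
    ((fun _ => u.1 (fun _ => false)), (fun _ => u.1 (fun _ => false))) _ rfl

lemma zmap_eval2 {Θ : PairSp X d → PairSp X d} (hΘ : Θ ∈ ellis2 T) (u : PairSp X d) :
    (Θ u).2 (fun _ => false) = zmap Θ (u.2 (fun _ => false)) := by
  have h1 := ellis2_cond2 hΘ u
    ((fun _ => u.2 (fun _ => false)), (fun _ => u.2 (fun _ => false))) (fun _ => false) rfl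
  rw [h1]
  exact (ellis2_sync hΘ _ rfl).symm

lemma zmap_comp {Θ Φ : PairSp X d → PairSp X d} (hΘ : Θ ∈ ellis2 T) (hΦ : Φ ∈ ellis2 T)
    (x : X) : zmap (Θ ∘ Φ) x = zmap Θ (zmap Φ x) := by
  show (Θ (Φ ((fun _ => x), (fun _ => x)))).1 (fun _ => false) = _
  rw [zmap_eval1 hΘ (Φ ((fun _ => x), (fun _ => x)))]
  rfl

lemma zmap_swap {Θ : PairSp X d → PairSp X d} (hΘ : Θ ∈ ellis2 T) (x : X) :
    zmap (fun u : PairSp X d => ((Θ (u.2, u.1)).2, (Θ (u.2, u.1)).1)) x = zmap Θ x := by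
  show (Θ ((fun _ => x), (fun _ => x))).2 (fun _ => false) = _
  rw [zmap_eval2 hΘ]

lemma cube_tool (hc : ∀ i j : Fin d, Commute (T i) (T j)) (hmin : IsMinimalSystem T)
    (hdist : IsDistalSystem T) {w : (Fin d → Bool) → X} (hw : w ∈ cubes T) :
    ∃ p p' : ((Fin d → Bool) → X) → ((Fin d → Bool) → X),
      (∀ u, u ∈ cubes T → p u ∈ cubes T) ∧
      (∀ u, u ∈ cubes T → p' u ∈ cubes T) ∧
      (∀ u u' ε, u ε = u' ε → p u ε = p u' ε) ∧
      (∀ u u' ε, u ε = u' ε → p' u ε = p' u' ε) ∧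
      (∀ u, p u (fun _ => false) = u (fun _ => false)) ∧
      (∀ u, p' u (fun _ => false) = u (fun _ => false)) ∧
      (p w = fun _ => w (fun _ => false)) ∧
      (∀ u, p' (p u) = u) := by
  obtain ⟨P, hP, hPval⟩ := ellis2_claimA hc hmin hw
  obtain ⟨Ψ, hΨ, hΨP, hPΨ⟩ := ellis2_exists_inverse hc hdist hP
  have hΨval : Ψ (w, fun _ => w (fun _ => false))
      = ((fun _ => w (fun _ => false)), (fun _ => w (fun _ => false))) := by
    have h := congrFun hΨP
      ((fun _ => w (fun _ => false)), (fun _ => w (fun _ => false)))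
    rw [← hPval]
    exact h
  have hΨs : (fun u : PairSp X d => ((Ψ (u.2, u.1)).2, (Ψ (u.2, u.1)).1)) ∈ ellis2 T :=
    ellis2_swap hΨ
  have hΨsval : (fun u : PairSp X d => ((Ψ (u.2, u.1)).2, (Ψ (u.2, u.1)).1))
      ((fun _ => w (fun _ => false)), w)
      = ((fun _ => w (fun _ => false)), (fun _ => w (fun _ => false))) := by
    show ((Ψ (w, fun _ => w (fun _ => false))).2, (Ψ (w, fun _ => w (fun _ => false))).1) = _
    rw [hΨval]
  obtain ⟨Φ, hΦ, hΦΨs, hΨsΦ⟩ := ellis2_exists_inverse hc hdist hΨs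
  have hΘ : Φ ∘ Ψ ∈ ellis2 T := ellis2_comp_mem hc hΦ hΨ
  obtain ⟨Λ, hΛ, hΛΘ, hΘΛ⟩ := ellis2_exists_inverse hc hdist hΘ
  have hzΘ : ∀ x, zmap (Φ ∘ Ψ) x = x := by
    intro x
    have h1 : zmap (Φ ∘ Ψ) x = zmap Φ (zmap Ψ x) := zmap_comp hΦ hΨ x
    have h2 : zmap Ψ x
        = zmap (fun u : PairSp X d => ((Ψ (u.2, u.1)).2, (Ψ (u.2, u.1)).1)) x :=
      (zmap_swap hΨ x).symm
    have h3 : ∀ y, zmap Φ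
        (zmap (fun u : PairSp X d => ((Ψ (u.2, u.1)).2, (Ψ (u.2, u.1)).1)) y) = y := by
      intro y
      have h4 := zmap_comp hΦ hΨs y
      have h5 : zmap ((Φ ∘ fun u : PairSp X d => ((Ψ (u.2, u.1)).2, (Ψ (u.2, u.1)).1))) y
          = y := by
        rw [hΦΨs]
        rfl
      rw [h4] at h5
      exact h5
    rw [h1, h2, h3]
  have hzΛ : ∀ x, zmap Λ x = x := by
    intro x
    have h1 := zmap_comp hΛ hΘ x
    have h2 : zmap (Λ ∘ (Φ ∘ Ψ)) x = x := by
      rw [show Λ ∘ (Φ ∘ Ψ) = Λ ∘ Φ ∘ Ψ from rfl, hΛΘ]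
      rfl
    rw [h1, hzΘ x] at h2
    exact h2
  refine ⟨fun u => ((Φ ∘ Ψ) (u, u)).1, fun u => (Λ (u, u)).1, ?_, ?_, ?_, ?_, ?_, ?_, ?_, ?_⟩
  · exact fun u hu => (ellis2_mapsTo hc hΘ (u, u) hu hu).1
  · exact fun u hu => (ellis2_mapsTo hc hΛ (u, u) hu hu).1
  · exact fun u u' ε h => ellis2_cond1 hΘ (u, u) (u', u') ε h
  · exact fun u u' ε h => ellis2_cond1 hΛ (u, u) (u', u') ε h
  · intro u
    show ((Φ ∘ Ψ) (u, u)).1 (fun _ => false) = u (fun _ => false)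
    rw [zmap_eval1 hΘ (u, u)]
    exact hzΘ _
  · intro u
    show (Λ (u, u)).1 (fun _ => false) = u (fun _ => false)
    rw [zmap_eval1 hΛ (u, u)]
    exact hzΛ _
  · funext ε
    have hstep : ((Φ ∘ Ψ) (w, w)).1 ε
        = ((Φ ∘ Ψ) (w, fun _ => w (fun _ => false))).1 ε := ellis2_cond1 hΘ _ _ ε rfl
    show ((Φ ∘ Ψ) (w, w)).1 ε = w (fun _ => false)
    rw [hstep]
    have hval : (Φ ∘ Ψ) (w, fun _ => w (fun _ => false))
        = ((fun _ => w (fun _ => false)), w) := by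
      show Φ (Ψ (w, fun _ => w (fun _ => false))) = _
      rw [hΨval, ← hΨsval]
      exact congrFun hΦΨs ((fun _ => w (fun _ => false)), w)
    rw [hval]
  · intro u
    funext ε
    show (Λ (((Φ ∘ Ψ) (u, u)).1, ((Φ ∘ Ψ) (u, u)).1)).1 ε = u ε
    have hstep : (Λ (((Φ ∘ Ψ) (u, u)).1, ((Φ ∘ Ψ) (u, u)).1)).1 ε
        = (Λ ((Φ ∘ Ψ) (u, u))).1 ε := ellis2_cond1 hΛ _ _ ε rfl
    rw [hstep]
    rw [show Λ ((Φ ∘ Ψ) (u, u)) = (u, u) from congrFun hΛΘ (u, u)]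

end Tool

section SRelSec

variable {X : Type*} [MetricSpace X] [CompactSpace X] {T : Fin d → X ≃ₜ X}

/-- two cubes agreeing everywhere except possibly at the base vertex. -/
def SRel (T : Fin d → X ≃ₜ X) : X → X → Prop := fun a b =>
  ∃ ζ ζ' : (Fin d → Bool) → X, ζ ∈ cubes T ∧ ζ' ∈ cubes T ∧
    ζ (fun _ => false) = a ∧ ζ' (fun _ => false) = b ∧
    ∀ ε, ε ≠ (fun _ => false) → ζ ε = ζ' ε

lemma xor_false_fun (η : Fin d → Bool) : (fun i => xor (η i) false) = η := by
  funext i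
  cases η i <;> rfl

lemma xor_self_fun (η : Fin d → Bool) : (fun i => xor (η i) (η i)) = fun _ : Fin d => false := by
  funext i
  cases η i <;> rfl

lemma xor_invol_fun (η ε : Fin d → Bool) :
    (fun i => xor (η i) (xor (η i) (ε i))) = ε := by
  funext i
  cases η i <;> cases ε i <;> rfl

lemma xor_ne_base {η ε : Fin d → Bool} (h : ε ≠ (fun _ => false)) :
    (fun i => xor (η i) (ε i)) ≠ η := by
  intro hcontra
  apply h
  funext i
  have h2 := congrFun hcontra i
  revert h2
  cases η i <;> cases ε i <;> simp

lemma xor_ne_base' {η ε : Fin d → Bool} (h : ε ≠ η) :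
    (fun i => xor (η i) (ε i)) ≠ (fun _ : Fin d => false) := by
  intro hcontra
  apply h
  funext i
  have h2 := congrFun hcontra i
  revert h2
  cases η i <;> cases ε i <;> simp

lemma relRP_sub_SRel (hc : ∀ i j : Fin d, Commute (T i) (T j)) {a b : X} (j : Fin d)
    (hab : rpRel T a b) : SRel T a b := by
  have hj := Set.mem_iInter.1 hab j
  obtain ⟨z, hz, h1, h2, h3⟩ := hj
  refine ⟨z, fun ε => z (Function.update ε j true), hz, cubes_updTrue_mem hc j hz, h1, ?_, ?_⟩
  · show z (Function.update (fun _ => false) j true) = b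
    rw [upd_false_true j]
    exact h2
  · intro ε hε
    show z ε = z (Function.update ε j true)
    cases hεj : ε j with
    | false => exact h3 ε hεj hε
    | true =>
      have h5 : Function.update ε j true = ε := by
        rw [← hεj]
        exact Function.update_eq_self j ε
      rw [h5]

lemma SRel_sub_relRP (hc : ∀ i j : Fin d, Commute (T i) (T j)) (hmin : IsMinimalSystem T)
    (hdist : IsDistalSystem T) {a b : X} (hS : SRel T a b) : rpRel T a b := by
  obtain ⟨ζ, ζ', hζ, hζ', hζa, hζ'b, hagree⟩ := hS
  obtain ⟨p, p', hpQ, hp'Q, hpcond, hp'cond, hp0, hp'0, hpw, hpp'⟩ :=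
    cube_tool hc hmin hdist hζ
  have hκQ : p ζ' ∈ cubes T := hpQ ζ' hζ'
  have hκ0 : p ζ' (fun _ => false) = b := by rw [hp0 ζ']; exact hζ'b
  have hκε : ∀ ε, ε ≠ (fun _ => false) → p ζ' ε = a := by
    intro ε hε
    rw [hpcond ζ' ζ ε (hagree ε hε).symm, hpw]
    exact hζa
  refine Set.mem_iInter.2 fun j => ?_
  refine ⟨fun ε => p ζ' (Function.update ε j (!(ε j))), cubes_flip_mem hc j hκQ, ?_, ?_, ?_⟩
  · show p ζ' (Function.update (fun _ => false) j (!(false : Bool))) = a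
    rw [Bool.not_false, upd_false_true j]
    refine hκε _ ?_
    intro hcontra
    have h6 := congrFun hcontra j
    simp at h6
  · show p ζ' (Function.update (fun i => decide (i = j)) j (!(decide (j = j) : Bool))) = b
    rw [decide_eq_true (Eq.refl j), Bool.not_true, upd_ind_false j]
    exact hκ0
  · intro ε hεj hεne
    show p ζ' (Function.update ε j (!(ε j)))
        = p ζ' (Function.update (Function.update ε j true) j
            (!(Function.update ε j true j)))
    rw [hεj, Bool.not_false, Function.update_self, Bool.not_true, Function.update_idem]
    have h4 : Function.update ε j false = ε := by
      conv_rhs => rw [← Function.update_eq_self j ε]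
      rw [hεj]
    rw [h4]
    have h7 : Function.update ε j true ≠ (fun _ : Fin d => false) := by
      intro hcontra
      have h8 := congrFun hcontra j
      rw [Function.update_self] at h8
      simp at h8
    rw [hκε _ h7, hκε _ hεne]

lemma SRel_trans (hc : ∀ i j : Fin d, Commute (T i) (T j)) (hmin : IsMinimalSystem T)
    (hdist : IsDistalSystem T) {a b c : X} (h1 : SRel T a b) (h2 : SRel T b c) :
    SRel T a c := by
  obtain ⟨ζ, ζ', hζ, hζ', hζa, hζ'b, hag1⟩ := h1
  obtain ⟨η, η', hη, hη', hηb, hη'c, hag2⟩ := h2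
  obtain ⟨p, p', hpQ, _, hpcond, _, hp0, _, hpw, _⟩ := cube_tool hc hmin hdist hζ'
  obtain ⟨q, q', hqQ, _, hqcond, _, hq0, _, hqw, _⟩ := cube_tool hc hmin hdist hη
  refine ⟨p ζ, q η', hpQ ζ hζ, hqQ η' hη',
    by rw [hp0]; exact hζa, by rw [hq0]; exact hη'c, ?_⟩
  intro ε hε
  rw [hpcond ζ ζ' ε (hag1 ε hε), hqcond η' η ε (hag2 ε hε).symm, hpw, hqw, hζ'b, hηb]

lemma master_lemma (hc : ∀ i j : Fin d, Commute (T i) (T j)) (hmin : IsMinimalSystem T)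
    (hdist : IsDistalSystem T) {z w : (Fin d → Bool) → X} (hz : z ∈ cubes T)
    (hw : w ∈ cubes T) (ε₀ : Fin d → Bool) (hagree : ∀ ε, ε ≠ ε₀ → z ε = w ε) :
    rpRel T (z ε₀) (w ε₀) := by
  apply SRel_sub_relRP hc hmin hdist
  refine ⟨fun ε => z (fun i => xor (ε₀ i) (ε i)), fun ε => w (fun i => xor (ε₀ i) (ε i)),
    cubes_xor_mem hc ε₀ hz, cubes_xor_mem hc ε₀ hw, ?_, ?_, ?_⟩
  · show z (fun i => xor (ε₀ i) false) = z ε₀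
    rw [xor_false_fun]
  · show w (fun i => xor (ε₀ i) false) = w ε₀
    rw [xor_false_fun]
  · intro ε hε
    show z (fun i => xor (ε₀ i) (ε i)) = w (fun i => xor (ε₀ i) (ε i))
    exact hagree _ (xor_ne_base hε)

lemma exchange_lemma (hc : ∀ i j : Fin d, Commute (T i) (T j)) (hmin : IsMinimalSystem T)
    (hdist : IsDistalSystem T) {w : (Fin d → Bool) → X} {v : X} (hw : w ∈ cubes T)
    (ε₁ : Fin d → Bool) (j₀ : Fin d) (hrel : rpRel T (w ε₁) v) :
    ∃ w', w' ∈ cubes T ∧ w' ε₁ = v ∧ ∀ ε, ε ≠ ε₁ → w' ε = w ε := by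
  have hwt : (fun ε => w (fun i => xor (ε₁ i) (ε i))) ∈ cubes T := cubes_xor_mem hc ε₁ hw
  have hwt0 : (fun ε => w (fun i => xor (ε₁ i) (ε i))) (fun _ => false) = w ε₁ := by
    show w (fun i => xor (ε₁ i) false) = w ε₁
    rw [xor_false_fun]
  obtain ⟨ζ, ζ', hζ, hζ', hζ0, hζ'v, hagS⟩ := relRP_sub_SRel hc j₀ hrel
  obtain ⟨p, p', hpQ, _, hpcond, _, hp0, _, hpw, _⟩ := cube_tool hc hmin hdist hζ
  have hκQ := hpQ ζ' hζ'
  have hκ0 : p ζ' (fun _ => false) = v := by rw [hp0]; exact hζ'v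
  have hκε : ∀ ε, ε ≠ (fun _ => false) → p ζ' ε = w ε₁ := by
    intro ε hε
    rw [hpcond ζ' ζ ε (hagS ε hε).symm, hpw]
    exact hζ0
  obtain ⟨q, q', hqQ, hq'Q, hqcond, hq'cond, hq0, hq'0, hqw, hqq'⟩ :=
    cube_tool hc hmin hdist hwt
  refine ⟨fun ε => q' (p ζ') (fun i => xor (ε₁ i) (ε i)),
    cubes_xor_mem hc ε₁ (hq'Q _ hκQ), ?_, ?_⟩
  · show q' (p ζ') (fun i => xor (ε₁ i) (ε₁ i)) = v
    rw [xor_self_fun, hq'0]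
    exact hκ0
  · intro ε hε
    show q' (p ζ') (fun i => xor (ε₁ i) (ε i)) = w ε
    have hτ : (fun i => xor (ε₁ i) (ε i)) ≠ (fun _ : Fin d => false) := xor_ne_base' hε
    have hqwt : q (fun ε => w (fun i => xor (ε₁ i) (ε i))) = fun _ => w ε₁ := by
      rw [hqw]
      funext ε'
      exact hwt0
    have e1 : q' (p ζ') (fun i => xor (ε₁ i) (ε i))
        = q' (q (fun ε => w (fun i => xor (ε₁ i) (ε i)))) (fun i => xor (ε₁ i) (ε i)) := by
      apply hq'cond
      rw [hqwt]
      exact hκε _ hτ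
    rw [e1, hqq']
    show w (fun i => xor (ε₁ i) (xor (ε₁ i) (ε i))) = w ε
    rw [xor_invol_fun]

end SRelSec

section Core

lemma core_trans {X : Type*} [MetricSpace X] [CompactSpace X] {T : Fin d → X ≃ₜ X}
    (hcomm : ∀ i j : Fin d, ∀ x : X, T i (T j x) = T j (T i x))
    (hmin : IsMinimalSystem T) (hdist : IsDistalSystem T)
    {a b c : X} (h1 : rpRel T a b) (h2 : rpRel T b c) : rpRel T a c := by
  rcases isEmpty_or_nonempty (Fin d) with hempty | hne
  · exact Set.mem_iInter.2 fun j => (hempty.elim j)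
  · obtain ⟨j₀⟩ := hne
    have hc : ∀ i j : Fin d, Commute (T i) (T j) := commute_of_hcomm hcomm
    exact SRel_sub_relRP hc hmin hdist
      (SRel_trans hc hmin hdist (relRP_sub_SRel hc j₀ h1) (relRP_sub_SRel hc j₀ h2))

lemma core_closing {X : Type*} [MetricSpace X] [CompactSpace X] {T : Fin d → X ≃ₜ X}
    (hcomm : ∀ i j : Fin d, ∀ x : X, T i (T j x) = T j (T i x))
    (hmin : IsMinimalSystem T) (hdist : IsDistalSystem T) :
    ∀ z ∈ cubes T, ∀ w ∈ cubes T, ∀ ε₀ : Fin d → Bool,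
      (∀ ε, ε ≠ ε₀ → rpRel T (z ε) (w ε)) → rpRel T (z ε₀) (w ε₀) := by
  classical
  intro z hz w hw ε₀ hR
  rcases isEmpty_or_nonempty (Fin d) with hempty | hne
  · exact Set.mem_iInter.2 fun j => (hempty.elim j)
  · obtain ⟨j₀⟩ := hne
    have hc : ∀ i j : Fin d, Commute (T i) (T j) := commute_of_hcomm hcomm
    have key : ∀ L : List (Fin d → Bool), (∀ ε ∈ L, ε ≠ ε₀) →
        ∃ w', w' ∈ cubes T ∧ (∀ ε ∈ L, w' ε = z ε) ∧ (∀ ε, ε ∉ L → w' ε = w ε) := by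
      intro L
      induction L with
      | nil =>
        exact fun _ => ⟨w, hw, fun ε h => absurd h List.not_mem_nil, fun _ _ => rfl⟩
      | cons ε₁ L ih =>
        intro hL
        obtain ⟨w'', hw'', hin, hout⟩ := ih (fun ε hε => hL ε (List.mem_cons_of_mem _ hε))
        by_cases hmem : ε₁ ∈ L
        · refine ⟨w'', hw'', ?_, ?_⟩
          · intro ε hε
            rcases List.mem_cons.mp hε with h | h
            · subst h; exact hin ε hmem
            · exact hin ε h
          · intro ε hε
            exact hout ε (fun hh => hε (List.mem_cons_of_mem _ hh))
        · have hrel : rpRel T (w'' ε₁) (z ε₁) := by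
            rw [hout ε₁ hmem]
            exact rpRel_symm hc (hR ε₁ (hL ε₁ (List.mem_cons_self)))
          obtain ⟨w', hw', hv, hrest⟩ := exchange_lemma hc hmin hdist hw'' ε₁ j₀ hrel
          refine ⟨w', hw', ?_, ?_⟩
          · intro ε hε
            rcases List.mem_cons.mp hε with h | h
            · subst h; exact hv
            · rw [hrest ε (fun hcontra => hmem (hcontra ▸ h))]
              exact hin ε h
          · intro ε hε
            have hne : ε ≠ ε₁ := fun h => hε (h ▸ List.mem_cons_self)
            rw [hrest ε hne]
            exact hout ε (fun hh => hε (List.mem_cons_of_mem _ hh))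
    obtain ⟨w', hw', hin, hout⟩ := key (Finset.univ.erase ε₀).toList (by
      intro ε hε
      rw [Finset.mem_toList, Finset.mem_erase] at hε
      exact hε.1)
    have hagree : ∀ ε, ε ≠ ε₀ → z ε = w' ε := by
      intro ε hε
      exact (hin ε (by
        rw [Finset.mem_toList, Finset.mem_erase]
        exact ⟨hε, Finset.mem_univ ε⟩)).symm
    have hm := master_lemma hc hmin hdist hz hw' ε₀ hagree
    have hε₀ : w' ε₀ = w ε₀ := hout ε₀ (by
      intro hcontra
      rw [Finset.mem_toList, Finset.mem_erase] at hcontra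
      exact hcontra.1 rfl)
    rw [hε₀] at hm
    exact hm

end Core

/-- **Corollary `prop5`.**  For a minimal distal `ℤ^d`-system, the quotient
`X/R_{T₁,…,T_d}(X)` carries an induced `ℤ^d`-system structure which has the unique closing
parallelepiped property, and it is the maximal factor with this property: any factor map
`π'` onto a `ℤ^d`-system with the unique closing parallelepiped property factorizes through
the quotient map. -/
theorem maximal_ucp_factor {X : Type*} [MetricSpace X] [CompactSpace X] {d : ℕ}
    (T : Fin d → X ≃ₜ X)
    (hcomm : ∀ i j : Fin d, ∀ x : X, T i (T j x) = T j (T i x))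
    (hmin : IsMinimalSystem T) (hdist : IsDistalSystem T) :
    ∃ TQ : Fin d → (Quot (rpRel T) ≃ₜ Quot (rpRel T)),
      (∀ (i : Fin d) (x : X), TQ i (Quot.mk (rpRel T) x) = Quot.mk (rpRel T) (T i x)) ∧
      HasUCP TQ ∧
      ∀ (Z : Type*) [MetricSpace Z] [CompactSpace Z] (SZ : Fin d → Z ≃ₜ Z),
        (∀ i j : Fin d, ∀ z : Z, SZ i (SZ j z) = SZ j (SZ i z)) →
        ∀ π' : X → Z, Continuous π' → Function.Surjective π' →
          (∀ (i : Fin d) (x : X), π' (T i x) = SZ i (π' x)) →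
          HasUCP SZ →
          ∃ ψ : Quot (rpRel T) → Z, Continuous ψ ∧
            (∀ x : X, ψ (Quot.mk (rpRel T) x) = π' x) ∧
            ∀ (i : Fin d) (q : Quot (rpRel T)), ψ (TQ i q) = SZ i (ψ q) := by
  have hc : ∀ i j : Fin d, Commute (T i) (T j) := commute_of_hcomm hcomm
  have hEq : Equivalence (rpRel T) :=
    ⟨rpRel_refl, fun h => rpRel_symm hc h, fun h1 h2 => core_trans hcomm hmin hdist h1 h2⟩
  refine ⟨quotHomeo T hc, fun i x => quotHomeo_mk hc i x,
    hasUCP_quot hc hEq (core_closing hcomm hmin hdist), ?_⟩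
  intro Z _ _ SZ hcommZ π' hπc hπs hπeq hUCPZ
  have hfact : ∀ a b : X, rpRel T a b → π' a = π' b := by
    intro a b hab
    rcases isEmpty_or_nonempty (Fin d) with hempty | hne
    · have h := hUCPZ (fun _ => π' a) (const_mem_cubes _) (fun _ => π' b) (const_mem_cubes _)
        (fun _ => false) (fun ε hε => absurd (funext fun i => (hempty.elim i)) hε)
      exact congrFun h (fun _ => false)
    · obtain ⟨j⟩ := hne
      have hj := Set.mem_iInter.1 hab j
      obtain ⟨z, hz, hz1, hz2, hz3⟩ := hj
      have hcZ : ∀ i j : Fin d, Commute (SZ i) (SZ j) := commute_of_hcomm hcommZ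
      have hwQ : (fun ε => π' (z ε)) ∈ cubes SZ := cubes_map_mem SZ π' hπc hπeq hz
      have hw'Q : (fun ε => π' (z (Function.update ε j true))) ∈ cubes SZ :=
        cubes_updTrue_mem hcZ j hwQ
      have hagree : ∀ ε, ε ≠ (fun _ => false) →
          (fun ε => π' (z ε)) ε = (fun ε => π' (z (Function.update ε j true))) ε := by
        intro ε hε
        show π' (z ε) = π' (z (Function.update ε j true))
        cases hεj : ε j with
        | false => exact congrArg π' (hz3 ε hεj hε)
        | true =>
          have h5 : Function.update ε j true = ε := by
            rw [← hεj]; exact Function.update_eq_self j ε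
          rw [h5]
      have hzw := hUCPZ _ hwQ _ hw'Q (fun _ => false) hagree
      have hfin : π' (z (fun _ => false))
          = π' (z (Function.update (fun _ => false) j true)) := congrFun hzw _
      rw [upd_false_true j] at hfin
      have ha : z (fun _ => false) = a := hz1
      have hb : (z fun i => decide (i = j)) = b := hz2
      rw [← ha, ← hb]
      exact hfin
  refine ⟨Quot.lift π' (fun a b hab => hfact a b hab), continuous_quot_lift _ hπc,
    fun x => rfl, ?_⟩
  intro i q
  induction q using Quot.ind with
  | _ x =>
    show Quot.lift π' (fun a b hab => hfact a b hab)
        (quotHomeo T hc i (Quot.mk (rpRel T) x)) = SZ i (π' x)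
    rw [quotHomeo_mk hc i x]
    exact hπeq i x
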